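/- Let G_b = (V,E_b) be a finite simple graph with maximum degree at most 3 and expansion φ(G_b) ≥ α_b for some α_b > 0. Let D ⊆ E_b, let A be the set of endpoints of edges in D, and let G = (V, E_b∖D). Then for every α' < α_b/2, every nonempty S ⊆ V with |S| ≤ |V∖S| and φ_G(S) < α' satisfies |S| ≤ 4|A|/α_b. -/
import Mathlib


/-- Edges of `G` with one endpoint in `S` and the other endpoint in `U \ S`:
the cut edges `∂(S)` of `S`, inside the subgraph of `G` induced by `U` (when `S ⊆ U`). -/
def cutEdgesIn {V : Type*} (G : SimpleGraph V) (U S : Set V) : Set (Sym2 V) :=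
  {e | e ∈ G.edgeSet ∧ ∃ u v, e = s(u, v) ∧ u ∈ S ∧ v ∈ U ∧ v ∉ S}

/-- `δ(S)`, the number of cut edges of `S` inside the subgraph induced by `U`. -/
noncomputable def deltaIn {V : Type*} (G : SimpleGraph V) (U S : Set V) : ℕ :=
  (cutEdgesIn G U S).ncard

/-- The expansion `φ(S)` of the cut `S` inside the subgraph of `G` induced by `U`. -/
noncomputable def phiIn {V : Type*} (G : SimpleGraph V) (U S : Set V) : ℝ :=
  (deltaIn G U S : ℝ) / min (S.ncard : ℝ) ((U \ S).ncard : ℝ)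

open Finset in
lemma double_count {V : Type*} [Fintype V] (Gb : SimpleGraph V)
    (hdeg : ∀ v : V, (Gb.neighborSet v).ncard ≤ 3)
    (C : Set (Sym2 V)) (hC : C ⊆ Gb.edgeSet) :
    2 * C.ncard ≤ 3 * {v : V | ∃ e ∈ C, v ∈ e}.ncard := by
  classical
  set A : Set V := {v : V | ∃ e ∈ C, v ∈ e}
  rw [Set.ncard_eq_toFinset_card' C, Set.ncard_eq_toFinset_card' A, mul_comm 2, mul_comm 3]
  refine Finset.card_mul_le_card_mul (fun e v => v ∈ e) ?_ ?_
  · rintro e he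
    rw [Set.mem_toFinset] at he
    induction e using Sym2.ind with
    | h u v =>
      have hne : u ≠ v := (Gb.ne_of_adj (hC he))
      have hsub : ({u, v} : Finset V) ⊆ (A.toFinset.bipartiteAbove (fun e v => v ∈ e) s(u,v)) := by
        intro x hx
        rw [Finset.bipartiteAbove, Finset.mem_filter, Set.mem_toFinset]
        simp only [Finset.mem_insert, Finset.mem_singleton] at hx
        rcases hx with rfl | rfl
        · exact ⟨⟨s(x,v), he, Sym2.mem_mk_left x v⟩, Sym2.mem_mk_left x v⟩
        · exact ⟨⟨s(u,x), he, Sym2.mem_mk_right u x⟩, Sym2.mem_mk_right u x⟩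
      calc 2 = ({u, v} : Finset V).card := (Finset.card_pair hne).symm
        _ ≤ _ := Finset.card_le_card hsub
  · intro v hv
    have hsub : (C.toFinset.bipartiteBelow (fun e v => v ∈ e) v) ⊆
        (Gb.neighborFinset v).image (fun w => s(v, w)) := by
      intro e he
      rw [Finset.bipartiteBelow, Finset.mem_filter, Set.mem_toFinset] at he
      obtain ⟨heC, hve⟩ := he
      induction e using Sym2.ind with
      | h a b =>
        have hadj : Gb.Adj a b := hC heC
        rcases Sym2.mem_iff.mp hve with rfl | rfl
        · exact Finset.mem_image.mpr ⟨b, (Gb.mem_neighborFinset v b).mpr hadj, rfl⟩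
        · refine Finset.mem_image.mpr ⟨a, (Gb.mem_neighborFinset v a).mpr hadj.symm, ?_⟩
          rw [Sym2.eq_swap]
    calc (C.toFinset.bipartiteBelow (fun e v => v ∈ e) v).card
        ≤ ((Gb.neighborFinset v).image (fun w => s(v, w))).card := Finset.card_le_card hsub
      _ ≤ (Gb.neighborFinset v).card := Finset.card_image_le
      _ ≤ 3 := by rw [SimpleGraph.neighborFinset_def, ← Set.ncard_eq_toFinset_card']; exact hdeg v

/-- Let `G_b` have maximum degree ≤ 3 and expansion `φ(G_b) ≥ α_b > 0`,
let `D ⊆ E_b`, `A` the set of endpoints of edges of `D`, and `G = (V, E_b ∖ D)`. Then for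
every `α' < α_b/2`, every nonempty `S` with `|S| ≤ |V ∖ S|` and `φ_G(S) < α'` satisfies
`|S| ≤ 4|A|/α_b`. -/
theorem stmt5 {V : Type*} [Fintype V] (Gb : SimpleGraph V) (αb : ℝ) (hαb : 0 < αb)
    (hdeg : ∀ v : V, (Gb.neighborSet v).ncard ≤ 3)
    (hexp : ∀ S : Set V, S.Nonempty → S ≠ Set.univ → αb ≤ phiIn Gb Set.univ S)
    (D : Set (Sym2 V)) (hD : D ⊆ Gb.edgeSet)
    (α' : ℝ) (hα' : α' < αb / 2)
    (S : Set V) (hSne : S.Nonempty) (hSsize : S.ncard ≤ Sᶜ.ncard)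
    (hSphi : phiIn (Gb.deleteEdges D) Set.univ S < α') :
    (S.ncard : ℝ) ≤ 4 * ({v : V | ∃ e ∈ D, v ∈ e}.ncard : ℝ) / αb := by
  classical
  set A : Set V := {v : V | ∃ e ∈ D, v ∈ e} with hA
  have hSpos : 0 < (S.ncard : ℝ) := by
    exact_mod_cast (Set.ncard_pos S.toFinite).mpr hSne
  have hSneuniv : S ≠ Set.univ := by
    intro h
    have h1 : 1 ≤ S.ncard := (Set.ncard_pos S.toFinite).mpr hSne
    rw [h] at h1 hSsize
    rw [Set.compl_univ, Set.ncard_empty] at hSsize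
    omega
  have hmin : min (S.ncard : ℝ) ((Set.univ \ S).ncard : ℝ) = (S.ncard : ℝ) := by
    rw [← Set.compl_eq_univ_diff]
    exact min_eq_left (by exact_mod_cast hSsize)
  -- lower bound on δ_Gb
  have h1 : αb * S.ncard ≤ (deltaIn Gb Set.univ S : ℝ) := by
    have h := hexp S hSne hSneuniv
    rw [phiIn, hmin] at h
    calc αb * S.ncard ≤ ((deltaIn Gb Set.univ S : ℝ) / S.ncard) * S.ncard :=
          mul_le_mul_of_nonneg_right h hSpos.le
      _ = _ := div_mul_cancel₀ _ hSpos.ne'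
  -- upper bound on δ_G
  have h2 : (deltaIn (Gb.deleteEdges D) Set.univ S : ℝ) < α' * S.ncard := by
    rw [phiIn, hmin] at hSphi
    exact (div_lt_iff₀ hSpos).mp hSphi
  set C : Set (Sym2 V) := cutEdgesIn Gb Set.univ S ∩ D with hC
  have hsplit : (deltaIn Gb Set.univ S : ℝ) ≤
      (deltaIn (Gb.deleteEdges D) Set.univ S : ℝ) + C.ncard := by
    have hsub : cutEdgesIn Gb Set.univ S ⊆
        cutEdgesIn (Gb.deleteEdges D) Set.univ S ∪ C := by
      rintro e ⟨heE, u, v, rfl, hu, hv, hvn⟩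
      by_cases heD : s(u,v) ∈ D
      · exact Or.inr ⟨⟨heE, u, v, rfl, hu, hv, hvn⟩, heD⟩
      · refine Or.inl ⟨?_, u, v, rfl, hu, hv, hvn⟩
        rw [SimpleGraph.edgeSet_deleteEdges]
        exact ⟨heE, heD⟩
    have := (Set.ncard_le_ncard hsub (Set.toFinite _)).trans
      (Set.ncard_union_le _ _)
    unfold deltaIn
    exact_mod_cast this
  have hCsub : C ⊆ Gb.edgeSet := fun e he => he.1.1
  have hdc := double_count Gb hdeg C hCsub
  have hCA : {v : V | ∃ e ∈ C, v ∈ e} ⊆ A := by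
    rintro v ⟨e, heC, hve⟩
    exact ⟨e, heC.2, hve⟩
  have hAle : ({v : V | ∃ e ∈ C, v ∈ e}).ncard ≤ A.ncard :=
    Set.ncard_le_ncard hCA A.toFinite
  have hdc' : 2 * (C.ncard : ℝ) ≤ 3 * (A.ncard : ℝ) := by
    exact_mod_cast hdc.trans (by omega)
  have hApos : (0:ℝ) ≤ (A.ncard : ℝ) := Nat.cast_nonneg _
  rw [le_div_iff₀ hαb]
  nlinarith [mul_lt_mul_of_pos_right hα' hSpos, h1, h2, hsplit, hdc']
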